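/- The function h defined on the open interval (0,1) by h(θ) = tan((π/2)·θ)·(1−θ)/θ is monotone nonincreasing on (0,1): for all θ₁, θ₂ with 0 < θ₁ ≤ θ₂ < 1, h(θ₂) ≤ h(θ₁). -/

import Mathlib

open Real

lemma key_half {θ : ℝ} (h0 : 0 < θ) (h1 : θ ≤ 1/2) : π * θ * (1 - θ) ≤ Real.sin (π * θ) := by
  have hpi := Real.pi_gt_d6
  have hpi' := Real.pi_lt_d2
  rcases le_or_gt (π * θ) 1 with hx | hx
  · have hxpos : 0 < π * θ := by positivity
    have h := Real.sin_gt_sub_cube hxpos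
    have h3 : (π*θ)^3 ≤ (π*θ)^2 := by nlinarith
    have h4 : (π*θ)^2/4 ≤ π*θ^2 := by nlinarith [sq_nonneg θ]
    nlinarith
  · set t := π/2 - π*θ with ht
    have hsin : Real.sin (π * θ) = Real.cos t := by
      rw [ht, Real.cos_pi_div_two_sub]
    have hcos := Real.one_sub_sq_div_two_le_cos (x := t)
    have htub : t ≤ π/2 - 1 := by simp only [ht]; linarith
    have htlb : 0 ≤ t := by
      have : π * θ ≤ π * (1/2) := by nlinarith
      simp only [ht]; linarith
    rw [hsin]
    have ht2 : t^2 ≤ (π/2 - 1)^2 := pow_le_pow_left₀ htlb htub 2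
    nlinarith [sq_nonneg t]

lemma key {θ : ℝ} (h0 : 0 < θ) (h1 : θ < 1) : π * θ * (1 - θ) ≤ Real.sin (π * θ) := by
  rcases le_or_gt θ (1/2) with h | h
  · exact key_half h0 h
  · have h' := key_half (θ := 1 - θ) (by linarith) (by linarith)
    have : Real.sin (π * (1 - θ)) = Real.sin (π * θ) := by
      rw [mul_sub, mul_one, Real.sin_pi_sub]
    nlinarith [this ▸ h']

/-- h(θ) = tan((π/2)θ)·(1−θ)/θ is monotone nonincreasing on (0,1). -/
theorem stmt_2 (h : ℝ → ℝ) (hh : ∀ θ, h θ = Real.tan (π/2 * θ) * (1 - θ) / θ) :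
    ∀ θ₁ θ₂ : ℝ, 0 < θ₁ → θ₁ ≤ θ₂ → θ₂ < 1 → h θ₂ ≤ h θ₁ := by
  set f : ℝ → ℝ := fun θ : ℝ => Real.tan (π/2 * θ) * (1 - θ) / θ with hf
  set f' : ℝ → ℝ := fun x : ℝ =>
      (((1 / Real.cos (π/2 * x) ^ 2 * (π/2 * 1)) * (1 - x) + Real.tan (π/2 * x) * (0 - 1)) * x
          - Real.tan (π/2 * x) * (1 - x) * 1) / x^2 with hf'
  have hder : ∀ x ∈ Set.Ioo (0:ℝ) 1, HasDerivAt f (f' x) x := by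
    intro x hx
    obtain ⟨hx0, hx1⟩ := hx
    have hxne : x ≠ 0 := ne_of_gt hx0
    have hcosne : Real.cos (π/2 * x) ≠ 0 := by
      apply ne_of_gt
      apply Real.cos_pos_of_mem_Ioo
      constructor
      · nlinarith [Real.pi_pos]
      · nlinarith [Real.pi_pos]
    have h1 : HasDerivAt (fun θ : ℝ => π/2 * θ) (π/2 * 1) x := (hasDerivAt_id x).const_mul (π/2)
    have h2 : HasDerivAt (fun θ : ℝ => Real.tan (π/2 * θ)) (1 / Real.cos (π/2 * x) ^ 2 * (π/2 * 1)) x :=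
      (Real.hasDerivAt_tan hcosne).comp x h1
    have h3 : HasDerivAt (fun θ : ℝ => (1:ℝ) - θ) (0 - 1) x := (hasDerivAt_const x 1).sub (hasDerivAt_id x)
    exact (h2.mul h3).div (hasDerivAt_id x) hxne
  have hnonpos : ∀ x ∈ Set.Ioo (0:ℝ) 1, f' x ≤ 0 := by
    intro x hx
    obtain ⟨hx0, hx1⟩ := hx
    have hcospos : 0 < Real.cos (π/2 * x) := by
      apply Real.cos_pos_of_mem_Ioo
      constructor
      · nlinarith [Real.pi_pos]
      · nlinarith [Real.pi_pos]
    have hcosne : Real.cos (π/2 * x) ≠ 0 := ne_of_gt hcospos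
    set N := ((1 / Real.cos (π/2 * x) ^ 2 * (π/2 * 1)) * (1 - x) + Real.tan (π/2 * x) * (0 - 1)) * x
          - Real.tan (π/2 * x) * (1 - x) * 1 with hN
    have hkey := key hx0 hx1
    have hsc : Real.sin (π * x) = 2 * (Real.sin (π/2 * x) * Real.cos (π/2 * x)) := by
      have : π * x = 2 * (π/2 * x) := by ring
      rw [this, Real.sin_two_mul]; ring
    have hNc : N = (π/2 * x * (1 - x) - Real.sin (π/2 * x) * Real.cos (π/2 * x)) / Real.cos (π/2 * x) ^ 2 := by
      rw [hN, Real.tan_eq_sin_div_cos]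
      generalize Real.sin (π/2 * x) = s
      generalize hc : Real.cos (π/2 * x) = c at hcosne ⊢
      field_simp
      ring
    have hNle : N ≤ 0 := by
      rw [hNc]
      apply div_nonpos_iff.mpr
      exact Or.inr ⟨by linarith, sq_nonneg _⟩
    have : f' x = N / x^2 := rfl
    rw [this]
    exact div_nonpos_iff.mpr (Or.inr ⟨hNle, sq_nonneg x⟩)
  have hanti : AntitoneOn f (Set.Ioo 0 1) := by
    apply antitoneOn_of_hasDerivWithinAt_nonpos (convex_Ioo 0 1)
      (fun x hx => (hder x hx).continuousAt.continuousWithinAt)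
    · intro x hx
      rw [interior_Ioo] at hx ⊢
      exact (hder x hx).hasDerivWithinAt
    · intro x hx
      rw [interior_Ioo] at hx
      exact hnonpos x hx
  intro θ₁ θ₂ h0 h12 h21
  have := hanti (Set.mem_Ioo.mpr ⟨h0, lt_of_le_of_lt h12 h21⟩) (Set.mem_Ioo.mpr ⟨lt_of_lt_of_le h0 h12, h21⟩) h12
  rw [hh θ₁, hh θ₂]
  exact this
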